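/- For all natural numbers r and m with 0 ≤ m ≤ r, define Ssq(r,m) := [2m+1]·D₋₁·G(r−m)·G(r+m+1) / ( [r+1]²·G(r+1)² ) ∈ K (the square of the first-row Racah matrix entry S₀ₘ). Then there exist polynomials f, g ∈ ℚ[q,A] with Ssq(r,m) = f/g in K, such that the images of g under each of the two substitutions A := q and A := −q are nonzero elements of ℚ[q], and such that under each of these substitutions the quotient f/g, taken in the field ℚ(q), equals 1 if m = r and equals 0 if m < r. (This is the S-part of the paper's Lemma: at A = ±q the first row of the Racah matrix S satisfies S₀ₘ = δ_{m,r}.) -/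

import Mathlib

/- Let K be the fraction field of the polynomial ring ℚ[q,A]. -/

namespace Stmt6

/-- `K` is the fraction field of `ℚ[q,A]`. -/
abbrev K : Type := FractionRing (MvPolynomial (Fin 2) ℚ)

/-- The image of the indeterminate `q` in `K`. -/
noncomputable def q : K := algebraMap (MvPolynomial (Fin 2) ℚ) K (MvPolynomial.X 0)

/-- The image of the indeterminate `A` in `K`. -/
noncomputable def A : K := algebraMap (MvPolynomial (Fin 2) ℚ) K (MvPolynomial.X 1)

/-- `{x} := x − x⁻¹`. -/
noncomputable def br (x : K) : K := x - x⁻¹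

/-- The quantum integer `[n] := {qⁿ}/{q}` for `n ∈ ℤ`. -/
noncomputable def qint (n : ℤ) : K := br (q ^ n) / br q

/-- `D_j := {A·q^j}/{q}` for `j ∈ ℤ`. -/
noncomputable def D (j : ℤ) : K := br (A * q ^ j) / br q

/-- `G(n) := Π_{j=1}^{n} {A·q^{j−2}}/{q^j}` (so `G(0) = 1`). -/
noncomputable def G (n : ℕ) : K :=
  ∏ j ∈ Finset.Icc 1 n, br (A * q ^ ((j : ℤ) - 2)) / br (q ^ (j : ℤ))

/-- `Ssq(r,m) := [2m+1]·D₋₁·G(r−m)·G(r+m+1) / ( [r+1]²·G(r+1)² )`, the square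
of the first-row Racah matrix entry `S₀ₘ`. -/
noncomputable def Ssq (r m : ℕ) : K :=
  qint (2 * (m : ℤ) + 1) * D (-1) * G (r - m) * G (r + m + 1) /
    ((qint ((r : ℤ) + 1)) ^ 2 * (G (r + 1)) ^ 2)

/-- The substitution `q ↦ q`, `A ↦ q` from `ℚ[q,A]` into `ℚ[q]`. -/
noncomputable def subPos : MvPolynomial (Fin 2) ℚ →ₐ[ℚ] Polynomial ℚ :=
  MvPolynomial.aeval ![Polynomial.X, Polynomial.X]

/-- The substitution `q ↦ q`, `A ↦ −q` from `ℚ[q,A]` into `ℚ[q]`. -/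
noncomputable def subNeg : MvPolynomial (Fin 2) ℚ →ₐ[ℚ] Polynomial ℚ :=
  MvPolynomial.aeval ![Polynomial.X, -Polynomial.X]

abbrev R : Type := MvPolynomial (Fin 2) ℚ
noncomputable def φ : R →+* K := algebraMap R K
noncomputable def Qp : R := MvPolynomial.X 0
noncomputable def Ap : R := MvPolynomial.X 1

lemma φ_inj : Function.Injective φ := IsFractionRing.injective R K
lemma φ_ne {x : R} (h : x ≠ 0) : φ x ≠ 0 := by
  simpa using fun h' => h (φ_inj (h'.trans (map_zero φ).symm))

lemma hQ : Qp ≠ 0 := MvPolynomial.X_ne_zero 0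
lemma hA : Ap ≠ 0 := MvPolynomial.X_ne_zero 1
lemma hq : q ≠ 0 := φ_ne hQ
lemma hAne : A ≠ 0 := φ_ne hA

noncomputable def vp (n : ℕ) : R := Qp ^ (2*n) - 1
noncomputable def up (j : ℕ) : R := Ap^2 * Qp^(2*(j-1)) - Qp^2

lemma hv {n : ℕ} (h : 1 ≤ n) : vp n ≠ 0 := by
  intro hc
  have := congrArg (MvPolynomial.eval (fun _ : Fin 2 => (0:ℚ))) hc
  have h2 : 2*n ≠ 0 := by omega
  simp [vp, Qp, zero_pow h2] at this
lemma hu (j : ℕ) : up j ≠ 0 := by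
  intro hc
  have := congrArg (MvPolynomial.eval (fun i : Fin 2 => if i = 0 then (1:ℚ) else 2)) hc
  simp [up, Qp, Ap] at this
  norm_num at this

lemma q_eq : q = φ Qp := rfl
lemma A_eq : A = φ Ap := rfl

lemma br_eq (x : K) (hx : x ≠ 0) : br x = (x^2 - 1)/x := by
  rw [br, eq_div_iff hx]; field_simp

lemma brqn (n : ℕ) : br (q ^ (n:ℤ)) = φ (vp n) / φ (Qp^n) := by
  rw [zpow_natCast, br_eq _ (pow_ne_zero _ hq), vp, map_sub, map_pow, map_pow, map_one, ← q_eq,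
    ← pow_mul, mul_comm n 2]

lemma brq : br q = φ (vp 1) / φ Qp := by
  have := brqn 1; simpa using this

lemma bru (j : ℕ) (h : 1 ≤ j) :
    br (A * q ^ ((j:ℤ) - 2)) = φ (up j) / φ (Ap * Qp^j) := by
  obtain ⟨k, rfl⟩ := Nat.exists_eq_add_of_le h
  have e : q ^ (((1+k : ℕ):ℤ) - 2) = q ^ k / q ^ 1 := by
    rw [show (((1+k : ℕ):ℤ) - 2) = (k:ℤ) - 1 by push_cast; ring, zpow_sub₀ hq,
      zpow_natCast, zpow_one, pow_one]
  have hx : A * q ^ (((1+k : ℕ):ℤ) - 2) ≠ 0 := by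
    rw [e]; exact mul_ne_zero hAne (div_ne_zero (pow_ne_zero _ hq) (pow_ne_zero _ hq))
  rw [br_eq _ hx, e, up, map_sub, map_mul, map_pow, map_pow, map_mul, map_pow, ← q_eq, ← A_eq]
  rw [map_pow, ← q_eq]
  have : 2 * (1 + k - 1) = 2 * k := by omega
  rw [this]
  rw [div_eq_div_iff (by exact mul_ne_zero hAne (div_ne_zero (pow_ne_zero _ hq) (pow_ne_zero _ hq)))
    (mul_ne_zero hAne (pow_ne_zero _ hq))]
  field_simp [hq, hAne]
  ring

noncomputable def Vp (n : ℕ) : R := ∏ j ∈ Finset.Ioc 0 n, vp j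
noncomputable def Up (n : ℕ) : R := ∏ j ∈ Finset.Ioc 0 n, up j

lemma hV (n : ℕ) : Vp n ≠ 0 :=
  Finset.prod_ne_zero_iff.mpr fun j hj => hv (Finset.mem_Ioc.mp hj).1
lemma hU (n : ℕ) : Up n ≠ 0 := Finset.prod_ne_zero_iff.mpr fun _ _ => hu _

lemma G_eq (n : ℕ) : G n = φ (Up n) / (φ Ap ^ n * φ (Vp n)) := by
  rw [G, show (1:ℕ) = 0+1 from rfl, Finset.Icc_add_one_left_eq_Ioc]
  have step : ∀ j ∈ Finset.Ioc 0 n,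
      br (A * q ^ ((j : ℤ) - 2)) / br (q ^ (j : ℤ)) = φ (up j) / (φ Ap * φ (vp j)) := by
    intro j hj
    obtain ⟨hj1, _⟩ := Finset.mem_Ioc.mp hj
    rw [bru j hj1, brqn j, map_mul]
    rw [div_div_div_comm, mul_div_assoc, div_self (φ_ne (pow_ne_zero j hQ)), mul_one,
      div_div, mul_comm (φ (vp j))]
  rw [Finset.prod_congr rfl step, Finset.prod_div_distrib, Finset.prod_mul_distrib,
    Finset.prod_const, Nat.card_Ioc, Nat.sub_zero, Up, Vp, map_prod, map_prod]

lemma qint_eq (n : ℕ) :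
    qint (n:ℤ) = φ (vp n) * φ Qp / (φ (Qp^n) * φ (vp 1)) := by
  rw [qint, brqn, brq]
  rw [div_div_div_comm, div_div_eq_mul_div, div_mul_eq_mul_div, div_div, mul_comm (φ (Qp^n))]

lemma D_eq : D (-1) = φ (up 1) / (φ Ap * φ (vp 1)) := by
  have h2 : ((1:ℕ):ℤ) - 2 = -1 := by norm_num
  have hb := bru 1 le_rfl
  rw [h2] at hb
  rw [D, hb, brq, map_mul, pow_one, div_div_div_comm, mul_div_assoc, div_self (φ_ne hQ),
    mul_one, div_div, mul_comm (φ (vp 1))]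

noncomputable def W1 (m d : ℕ) : R := ∏ j ∈ Finset.Ioc (m+d+1) (2*m+d+1), up j
noncomputable def W2 (m d : ℕ) : R := ∏ j ∈ Finset.Ioc d (m+d+1), up j
noncomputable def Fp (m d : ℕ) : R := vp (2*m+1) * up 1 * W1 m d * Qp^(2*d) * Vp (m+d+1)^2
noncomputable def Gp (m d : ℕ) : R := W2 m d * Vp d * Vp (2*m+d+1) * vp (m+d+1)^2

lemma hW1 (m d : ℕ) : W1 m d ≠ 0 := Finset.prod_ne_zero_iff.mpr fun _ _ => hu _
lemma hW2 (m d : ℕ) : W2 m d ≠ 0 := Finset.prod_ne_zero_iff.mpr fun _ _ => hu _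

set_option maxHeartbeats 2000000 in
lemma core (m d : ℕ) : Ssq (m+d) m = φ (Fp m d) / φ (Gp m d) := by
  have hc1 : (2 * (m:ℤ) + 1) = ((2*m+1 : ℕ):ℤ) := by push_cast; ring
  have hc2 : (((m+d:ℕ)):ℤ) + 1 = ((m+d+1 : ℕ):ℤ) := by push_cast; ring
  have hsub : m + d - m = d := by omega
  have hi1 : m + d + m + 1 = 2*m+d+1 := by ring
  rw [Ssq, hsub, hc1, hc2, hi1, qint_eq, qint_eq, D_eq, G_eq, G_eq, G_eq, Fp, Gp]
  have hs1 : φ (Up (2*m+d+1)) = φ (Up (m+d+1)) * φ (W1 m d) := by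
    rw [← map_mul, Up, Up, W1, Finset.prod_Ioc_consecutive up (Nat.zero_le _) (by omega)]
  have hs2 : φ (Up (m+d+1)) = φ (Up d) * φ (W2 m d) := by
    rw [← map_mul, Up, Up, W2, Finset.prod_Ioc_consecutive up (Nat.zero_le _) (by omega)]
  simp only [map_mul, map_pow]
  rw [hs1, hs2]
  simp only [div_pow, div_mul_div_comm]
  rw [div_div_div_comm, div_div_eq_mul_div, div_mul_eq_mul_div, div_div]
  have z1 : φ (vp (m+d+1)) ≠ 0 := φ_ne (hv (by omega))
  have z2 : φ (vp 1) ≠ 0 := φ_ne (hv le_rfl)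
  have z3 : φ (vp (2*m+1)) ≠ 0 := φ_ne (hv (by omega))
  have z4 : φ Qp ≠ 0 := φ_ne hQ
  have z5 : φ Ap ≠ 0 := φ_ne hA
  have z6 : φ (Up d) ≠ 0 := φ_ne (hU d)
  have z7 : φ (W1 m d) ≠ 0 := φ_ne (hW1 m d)
  have z8 : φ (W2 m d) ≠ 0 := φ_ne (hW2 m d)
  have z9 : φ (Vp d) ≠ 0 := φ_ne (hV d)
  have z10 : φ (Vp (m+d+1)) ≠ 0 := φ_ne (hV _)
  have z11 : φ (Vp (2*m+d+1)) ≠ 0 := φ_ne (hV _)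
  rw [div_eq_div_iff (by simp [z1, z2, z3, z4, z5, z6, z7, z8, z9, z10, z11])
    (by simp [z1, z2, z3, z4, z5, z6, z7, z8, z9, z10, z11])]
  ring

noncomputable def vb (n : ℕ) : Polynomial ℚ := Polynomial.X^(2*n) - 1

lemma sp_Q : subPos Qp = Polynomial.X := by simp [subPos, Qp]
lemma sn_Q : subNeg Qp = Polynomial.X := by simp [subNeg, Qp]
lemma sp_vp (n : ℕ) : subPos (vp n) = vb n := by simp [subPos, vp, vb, Qp]
lemma sn_vp (n : ℕ) : subNeg (vp n) = vb n := by simp [subNeg, vp, vb, Qp]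
lemma sp_up (j : ℕ) : subPos (up j) = Polynomial.X^2 * vb (j-1) := by
  simp [subPos, up, vb, Qp, Ap]; ring
lemma sn_up (j : ℕ) : subNeg (up j) = Polynomial.X^2 * vb (j-1) := by
  simp [subNeg, up, vb, Qp, Ap]; ring

lemma vb_ne {n : ℕ} (h : 1 ≤ n) : vb n ≠ 0 := by
  intro hc
  have := congrArg (Polynomial.eval (0:ℚ)) hc
  have h2 : 2*n ≠ 0 := by omega
  simp [vb, zero_pow h2] at this
lemma spu_ne {j : ℕ} (h : 2 ≤ j) : subPos (up j) ≠ 0 := by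
  rw [sp_up]
  exact mul_ne_zero (pow_ne_zero _ Polynomial.X_ne_zero) (vb_ne (by omega))
lemma vb0 : vb 0 = 0 := by simp [vb]
lemma spu1 : subPos (up 1) = 0 := by simp [sp_up, vb0]
lemma snu1 : subNeg (up 1) = 0 := by simp [sn_up, vb0]

noncomputable def pb (n : ℕ) : Polynomial ℚ := ∏ j ∈ Finset.Ioc 0 n, vb j

lemma pb_ne (n : ℕ) : pb n ≠ 0 :=
  Finset.prod_ne_zero_iff.mpr fun j hj => vb_ne (Finset.mem_Ioc.mp hj).1
lemma sp_Vp (n : ℕ) : subPos (Vp n) = pb n := by simp [Vp, pb, map_prod, sp_vp]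
lemma sn_Vp (n : ℕ) : subNeg (Vp n) = pb n := by simp [Vp, pb, map_prod, sn_vp]

lemma shift (a b : ℕ) : ∏ j ∈ Finset.Ioc (a+1) (b+1), subPos (up j) =
    Polynomial.X^(2*(b-a)) * ∏ j ∈ Finset.Ioc a b, vb j := by
  rw [← Finset.map_add_right_Ioc, Finset.prod_map]
  simp only [addRightEmbedding_apply, sp_up, Nat.add_sub_cancel]
  rw [Finset.prod_mul_distrib, Finset.prod_const, Nat.card_Ioc, ← pow_mul]

noncomputable def f0 (m : ℕ) : R := vp (2*m+1) * W1 m 0 * Vp (m+1)^2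
noncomputable def g0 (m : ℕ) : R :=
  (∏ j ∈ Finset.Ioc 1 (m+1), up j) * Vp (2*m+1) * vp (m+1)^2

lemma Fp0 (m : ℕ) : Fp m 0 = up 1 * f0 m := by rw [Fp, f0]; ring
lemma Gp0 (m : ℕ) : Gp m 0 = up 1 * g0 m := by
  have e1 : Finset.Ioc 0 1 = ({1} : Finset ℕ) := rfl
  have hW : W2 m 0 = up 1 * ∏ j ∈ Finset.Ioc 1 (m+1), up j := by
    rw [W2, ← Finset.prod_Ioc_consecutive up (by omega : (0:ℕ) ≤ 1) (by omega : 1 ≤ m+0+1),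
      e1, Finset.prod_singleton]
  have hV0 : Vp 0 = 1 := by simp [Vp]
  rw [Gp, g0, hW, hV0]; ring

lemma pb_succ (n : ℕ) : pb (n+1) = pb n * vb (n+1) := by
  rw [pb, pb, ← Finset.prod_Ioc_succ_top (Nat.zero_le _)]

lemma key (m : ℕ) : subPos (f0 m) = subPos (g0 m) := by
  have h1 : ∏ j ∈ Finset.Ioc (m+1) (2*m+1), subPos (up j) =
      Polynomial.X^(2*m) * ∏ j ∈ Finset.Ioc m (2*m), vb j := by
    have := shift m (2*m)
    rw [show 2*m - m = m by omega] at this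
    exact this
  have h2 : ∏ j ∈ Finset.Ioc 1 (m+1), subPos (up j) = Polynomial.X^(2*m) * pb m := by
    have := shift 0 m
    simpa [pb] using this
  have h3 : pb (2*m) = pb m * ∏ j ∈ Finset.Ioc m (2*m), vb j := by
    rw [pb, pb, ← Finset.prod_Ioc_consecutive vb (Nat.zero_le m) (show m ≤ 2*m by omega)]
  simp only [f0, g0, W1, Nat.add_zero, map_mul, map_pow, map_prod, sp_vp, sp_Vp]
  rw [h1, h2, pb_succ m, pb_succ (2*m), h3]
  ring

lemma sn_f0 (m : ℕ) : subNeg (f0 m) = subPos (f0 m) := by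
  simp only [f0, W1, map_mul, map_pow, map_prod, sn_vp, sp_vp, sn_up, sp_up, sn_Vp, sp_Vp]
lemma sn_g0 (m : ℕ) : subNeg (g0 m) = subPos (g0 m) := by
  simp only [g0, map_mul, map_pow, map_prod, sn_vp, sp_vp, sn_up, sp_up, sn_Vp, sp_Vp]
lemma sn_Gp (m d : ℕ) : subNeg (Gp m d) = subPos (Gp m d) := by
  simp only [Gp, W2, map_mul, map_pow, map_prod, sn_vp, sp_vp, sn_up, sp_up, sn_Vp, sp_Vp]

lemma sp_g0_ne (m : ℕ) : subPos (g0 m) ≠ 0 := by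
  simp only [g0, map_mul, map_pow, map_prod]
  refine mul_ne_zero (mul_ne_zero ?_ ?_) (pow_ne_zero _ ?_)
  · exact Finset.prod_ne_zero_iff.mpr fun j hj =>
      spu_ne (by have := (Finset.mem_Ioc.mp hj).1; omega)
  · rw [sp_Vp]; exact pb_ne _
  · rw [sp_vp]; exact vb_ne (by omega)

lemma sp_Gp_ne (m k : ℕ) : subPos (Gp m (k+1)) ≠ 0 := by
  simp only [Gp, W2, map_mul, map_pow, map_prod]
  refine mul_ne_zero (mul_ne_zero (mul_ne_zero ?_ ?_) ?_) (pow_ne_zero _ ?_)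
  · exact Finset.prod_ne_zero_iff.mpr fun j hj =>
      spu_ne (by have := (Finset.mem_Ioc.mp hj).1; omega)
  · rw [sp_Vp]; exact pb_ne _
  · rw [sp_Vp]; exact pb_ne _
  · rw [sp_vp]; exact vb_ne (by omega)

lemma sp_Fp_zero (m k : ℕ) : subPos (Fp m (k+1)) = 0 := by
  simp only [Fp, map_mul, spu1, mul_zero, zero_mul]
lemma sn_Fp_zero (m k : ℕ) : subNeg (Fp m (k+1)) = 0 := by
  simp only [Fp, map_mul, snu1, mul_zero, zero_mul]

/-- For `0 ≤ m ≤ r` there exist polynomials `f, g ∈ ℚ[q,A]` with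
`Ssq(r,m) = f/g` in `K`, such that the images of `g` under each of the two
substitutions `A := q` and `A := −q` are nonzero elements of `ℚ[q]`, and such
that under each of these substitutions the quotient `f/g`, taken in `ℚ(q)`,
equals `1` if `m = r` and equals `0` if `m < r`: at `A = ±q` the first row of
the Racah matrix `S` satisfies `S₀ₘ = δ_{m,r}`. -/
theorem S_first_row_at_A_eq_pm_q (r m : ℕ) (hm : m ≤ r) :
    ∃ f g : MvPolynomial (Fin 2) ℚ,
      Ssq r m = algebraMap (MvPolynomial (Fin 2) ℚ) K f /
          algebraMap (MvPolynomial (Fin 2) ℚ) K g ∧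
      subPos g ≠ 0 ∧ subNeg g ≠ 0 ∧
      algebraMap (Polynomial ℚ) (RatFunc ℚ) (subPos f) /
          algebraMap (Polynomial ℚ) (RatFunc ℚ) (subPos g) =
        (if m = r then 1 else 0) ∧
      algebraMap (Polynomial ℚ) (RatFunc ℚ) (subNeg f) /
          algebraMap (Polynomial ℚ) (RatFunc ℚ) (subNeg g) =
        (if m = r then 1 else 0) := by
  obtain ⟨d, rfl⟩ : ∃ d, r = m + d := ⟨r - m, by omega⟩
  rcases d with _ | k
  · refine ⟨f0 m, g0 m, ?_, sp_g0_ne m, by rw [sn_g0]; exact sp_g0_ne m, ?_, ?_⟩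
    · rw [core m 0, Fp0, Gp0, map_mul, map_mul,
        mul_div_mul_left _ _ (φ_ne (hu 1))]
      rfl
    · rw [if_pos (by omega : m = m + 0), key m,
        div_self (RatFunc.algebraMap_ne_zero (sp_g0_ne m))]
    · rw [if_pos (by omega : m = m + 0), sn_f0, sn_g0, key m,
        div_self (RatFunc.algebraMap_ne_zero (sp_g0_ne m))]
  · refine ⟨Fp m (k+1), Gp m (k+1), ?_, sp_Gp_ne m k,
      by rw [sn_Gp]; exact sp_Gp_ne m k, ?_, ?_⟩
    · exact core m (k+1)
    · rw [if_neg (by omega : ¬ m = m + (k+1)), sp_Fp_zero, map_zero, zero_div]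
    · rw [if_neg (by omega : ¬ m = m + (k+1)), sn_Fp_zero, map_zero, zero_div]

end Stmt6
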